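/- Fix 0 < s < K, r ≥ 0, and set κ := ln K − ln s > 0. Let δ > 0 and h : (0,δ) → (0,∞), and suppose there exists u > 0 such that lim_{τ→0⁺} C_BS(τ, s; h(τ), r, K)/τ = u. Then lim_{τ→0⁺} h(τ) √τ = 0. -/

import Mathlib

open MeasureTheory Filter Topology

/-- Standard normal cumulative distribution function. -/
noncomputable def stdNormalCDF (x : ℝ) : ℝ :=
  ∫ u in Set.Iic x, Real.exp (-u ^ 2 / 2) / Real.sqrt (2 * Real.pi)

/-- Black–Scholes call price with time-to-maturity `τ`, spot `s`, volatility `σ`,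
interest rate `r` and strike `K`. -/
noncomputable def BSCall (τ s σ r K : ℝ) : ℝ :=
  s * stdNormalCDF ((Real.log (s / K) + (r + σ ^ 2 / 2) * τ) / (σ * Real.sqrt τ)) -
    K * Real.exp (-r * τ) *
      stdNormalCDF ((Real.log (s / K) + (r - σ ^ 2 / 2) * τ) / (σ * Real.sqrt τ))

section BSAux
open Real


noncomputable def nPdf (x : ℝ) : ℝ := Real.exp (-x ^ 2 / 2) / Real.sqrt (2 * Real.pi)

lemma sqrt2pi_pos : 0 < Real.sqrt (2 * Real.pi) := Real.sqrt_pos.2 (by positivity)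

lemma one_le_sqrt2pi : 1 ≤ Real.sqrt (2 * Real.pi) := by
  rw [show (1:ℝ) = Real.sqrt 1 by simp]
  exact Real.sqrt_le_sqrt (by nlinarith [Real.pi_gt_three])

lemma nPdf_pos (x : ℝ) : 0 < nPdf x := by
  unfold nPdf; positivity

lemma nPdf_cont : Continuous nPdf := by
  unfold nPdf
  exact (Real.continuous_exp.comp (by continuity)).div_const _

lemma nPdf_integrable : Integrable nPdf := by
  have h : nPdf = fun x => Real.exp (-(1/2) * x ^ 2) / Real.sqrt (2 * Real.pi) := by
    funext x; unfold nPdf; ring_nf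
  rw [h]
  exact (integrable_exp_neg_mul_sq (by norm_num)).div_const _

lemma nPdf_ge {a x : ℝ} (h : x ^ 2 ≤ a ^ 2) : nPdf a ≤ nPdf x := by
  unfold nPdf
  exact div_le_div_of_nonneg_right (Real.exp_le_exp.2 (by nlinarith)) sqrt2pi_pos.le

lemma stdCDF_mono : Monotone (fun x : ℝ => ∫ u in Set.Iic x, nPdf u) := fun a b hab =>
  setIntegral_mono_set nPdf_integrable.integrableOn
    (Filter.Eventually.of_forall fun x => (nPdf_pos x).le)
    (HasSubset.Subset.eventuallyLE (Set.Iic_subset_Iic.2 hab))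

lemma stdCDF_nonneg (x : ℝ) : 0 ≤ ∫ u in Set.Iic x, nPdf u :=
  setIntegral_nonneg measurableSet_Iic fun y _ => (nPdf_pos y).le

lemma stdCDF_le_exp {x : ℝ} (hx : x ≤ -2) : (∫ u in Set.Iic x, nPdf u) ≤ Real.exp x := by
  rw [← integral_exp_Iic x]
  apply setIntegral_mono_on nPdf_integrable.integrableOn (integrableOn_exp_Iic x)
    measurableSet_Iic
  intro t ht
  simp only [Set.mem_Iic] at ht
  have h1 : nPdf t ≤ Real.exp (-t^2/2) := by
    unfold nPdf
    calc Real.exp (-t^2/2) / Real.sqrt (2*Real.pi) ≤ Real.exp (-t^2/2) / 1 :=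
      div_le_div_of_nonneg_left (Real.exp_pos _).le one_pos one_le_sqrt2pi
    _ = Real.exp (-t^2/2) := by ring
  refine h1.trans (Real.exp_le_exp.2 ?_)
  nlinarith

lemma stdCDF_one_pos : nPdf 1 ≤ ∫ u in Set.Iic (1:ℝ), nPdf u := by
  have h1 : nPdf 1 * (volume (Set.Icc (0:ℝ) 1)).toReal ≤ ∫ u in Set.Icc (0:ℝ) 1, nPdf u := by
    apply setIntegral_ge_of_const_le_real measurableSet_Icc (by simp)
    · intro y hy
      exact nPdf_ge (by nlinarith [hy.1, hy.2])
    · exact nPdf_integrable.integrableOn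
  have h2 : (volume (Set.Icc (0:ℝ) 1)).toReal = 1 := by simp
  rw [h2, mul_one] at h1
  refine h1.trans (setIntegral_mono_set nPdf_integrable.integrableOn
    (Filter.Eventually.of_forall fun x => (nPdf_pos x).le)
    (HasSubset.Subset.eventuallyLE (fun y hy => hy.2)))

lemma shift_integral (a v : ℝ) :
    (∫ x in Set.Iic a, nPdf (x + v)) = ∫ u in Set.Iic (a + v), nPdf u := by
  have h := (measurePreserving_add_right (volume : Measure ℝ) v).setIntegral_preimage_emb
    (measurableEmbedding_addRight v) nPdf (Set.Iic (a + v))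
  rw [← h]
  congr 1
  ext x
  simp [Set.mem_preimage]

lemma nPdf_shift (x v : ℝ) : nPdf (x + v) = nPdf x * Real.exp (-(v*x) - v^2/2) := by
  unfold nPdf
  rw [div_mul_eq_mul_div, ← Real.exp_add]
  congr 2
  ring

lemma nPdf_shift_integrable (v : ℝ) : Integrable (fun x => nPdf (x + v)) :=
  ((measurePreserving_add_right (volume : Measure ℝ) v).integrable_comp_emb
    (measurableEmbedding_addRight v)).2 nPdf_integrable

lemma repr_lemma (d2 v ρ s K : ℝ) :
    s * (∫ u in Set.Iic (d2 + v), nPdf u) - K * Real.exp (-ρ) * (∫ u in Set.Iic d2, nPdf u)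
      = ∫ x in Set.Iic d2, (s * nPdf (x + v) - K * Real.exp (-ρ) * nPdf x) := by
  rw [← shift_integral d2 v, integral_sub (((nPdf_shift_integrable v).const_mul s).integrableOn)
    ((nPdf_integrable.const_mul _).integrableOn), integral_const_mul, integral_const_mul]

set_option maxHeartbeats 1000000 in
lemma bs_core (s K : ℝ) (hs : 0 < s) (hsK : s < K) (ε : ℝ) (hε : 0 < ε) :
    ∃ c : ℝ, 0 < c ∧ ∀ ρ v : ℝ, 0 ≤ ρ → ρ ≤ (Real.log K - Real.log s) / 2 → 0 < v → ε ≤ v →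
      c ≤ s * (∫ u in Set.Iic ((Real.log (s/K) + ρ)/v + v/2), nPdf u)
          - K * Real.exp (-ρ) * (∫ u in Set.Iic ((Real.log (s/K) + ρ)/v - v/2), nPdf u) := by
  have hK : 0 < K := hs.trans hsK
  set m := Real.log (s / K) with hm_def
  have hm_eq : m = Real.log s - Real.log K := Real.log_div hs.ne' hK.ne'
  have hm : m < 0 := by
    rw [hm_eq]; linarith [Real.log_lt_log hs hsK]
  set p := ∫ u in Set.Iic (1:ℝ), nPdf u with hp_def
  have hp : 0 < p := lt_of_lt_of_le (nPdf_pos 1) stdCDF_one_pos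
  set M : ℝ := max (2 + 2*(-m)) (max 4 (2*Real.log (2*K/(s*p)))) with hM_def
  have hM4 : (4:ℝ) ≤ M := le_trans (le_max_left _ _) (le_max_right _ _)
  have hM1 : 2 + 2*(-m) ≤ M := le_max_left _ _
  have hMlog : 2*Real.log (2*K/(s*p)) ≤ M := le_trans (le_max_right _ _) (le_max_right _ _)
  set L : ℝ := m/ε - M/2 with hL_def
  have hL : L < 0 := by
    have h1 : m/ε < 0 := div_neg_of_neg_of_pos hm hε
    rw [hL_def]; linarith
  set c1 : ℝ := K * Real.exp (m/2) * (Real.exp (ε/2) - 1) with hc1_def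
  have hc1 : 0 < c1 := by
    apply mul_pos (mul_pos hK (Real.exp_pos _))
    have : (1:ℝ) < Real.exp (ε/2) := Real.one_lt_exp_iff.mpr (by linarith)
    linarith
  set c2 : ℝ := nPdf (L - 1) with hc2_def
  have hc2 : 0 < c2 := nPdf_pos _
  refine ⟨min (s*p/2) (c1*c2/2), lt_min (by have := mul_pos hs hp; linarith) (by have := mul_pos hc1 hc2; linarith), ?_⟩
  intro ρ v hρ0 hρ1 hv0 hεv
  have hρm : ρ ≤ -m/2 := by rw [hm_eq]; linarith
  set cc : ℝ := m + ρ with hcc_def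
  have hcc1 : m ≤ cc := by linarith
  have hcc2 : cc ≤ m/2 := by linarith
  have hccneg : cc < 0 := by linarith
  clear_value m p M L c1 c2 cc
  rcases le_total M v with hMv | hvM
  · -- large total volatility case
    have hv1 : (1:ℝ) ≤ v := by linarith
    have hd1 : (1:ℝ) ≤ cc/v + v/2 := by
      have h1 : m ≤ cc/v := (le_div_iff₀ hv0).2 (by
        have h2 : m*v ≤ m*1 := mul_le_mul_of_nonpos_left hv1 hm.le
        linarith)
      linarith
    have hd2 : cc/v - v/2 ≤ -(M/2) := by
      have h1 : cc/v < 0 := div_neg_of_neg_of_pos hccneg hv0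
      linarith
    have hΦ1 : p ≤ ∫ u in Set.Iic (cc/v + v/2), nPdf u := by rw [hp_def]; exact stdCDF_mono hd1
    have hd2' : cc/v - v/2 ≤ -2 := by linarith
    have hsp : (0:ℝ) < s*p/(2*K) := div_pos (mul_pos hs hp) (by linarith)
    have hlog : Real.log (s*p/(2*K)) = -Real.log (2*K/(s*p)) := by
      rw [← Real.log_inv, inv_div]
    have hexpM : Real.exp (-(M/2)) ≤ s*p/(2*K) :=
      (Real.le_log_iff_exp_le hsp).1 (by rw [hlog]; linarith)
    have hΦ2 : (∫ u in Set.Iic (cc/v - v/2), nPdf u) ≤ s*p/(2*K) :=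
      (stdCDF_le_exp hd2').trans ((Real.exp_le_exp.2 hd2).trans hexpM)
    have hΦ2' : (0:ℝ) ≤ ∫ u in Set.Iic (cc/v - v/2), nPdf u := stdCDF_nonneg _
    have hexp1 : Real.exp (-ρ) ≤ 1 := Real.exp_le_one_iff.2 (by linarith)
    have hKsp : K * (s*p/(2*K)) = s*p/2 := by field_simp
    have hB : K * Real.exp (-ρ) * (∫ u in Set.Iic (cc/v - v/2), nPdf u) ≤ s*p/2 := by
      calc K * Real.exp (-ρ) * (∫ u in Set.Iic (cc/v - v/2), nPdf u)
          ≤ K * 1 * (∫ u in Set.Iic (cc/v - v/2), nPdf u) := by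
            apply mul_le_mul_of_nonneg_right _ hΦ2'
            exact mul_le_mul_of_nonneg_left hexp1 hK.le
        _ = K * (∫ u in Set.Iic (cc/v - v/2), nPdf u) := by ring
        _ ≤ K * (s*p/(2*K)) := mul_le_mul_of_nonneg_left hΦ2 hK.le
        _ = s*p/2 := hKsp
    have hA : s*p ≤ s * ∫ u in Set.Iic (cc/v + v/2), nPdf u :=
      mul_le_mul_of_nonneg_left hΦ1 hs.le
    calc min (s*p/2) (c1*c2/2) ≤ s*p/2 := min_le_left _ _
      _ ≤ _ := by linarith
  · -- moderate total volatility case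
    set d2 : ℝ := cc/v - v/2 with hd2_def
    clear_value d2
    have hd2v : cc/v + v/2 = d2 + v := by rw [hd2_def]; ring
    have hvd2 : v * d2 = cc - v^2/2 := by rw [hd2_def]; field_simp
    have hcc' : cc = Real.log s - Real.log K + ρ := by rw [hcc_def, hm_eq]
    have hLd2 : L ≤ d2 := by
      have h1 : m/ε ≤ cc/v := by
        rw [div_le_div_iff₀ hε hv0]
        have h2 : m*v ≤ m*ε := mul_le_mul_of_nonpos_left hεv hm.le
        have h3 : m*ε ≤ cc*ε := mul_le_mul_of_nonneg_right hcc1 hε.le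
        linarith
      rw [hL_def, hd2_def]
      have h2 : v/2 ≤ M/2 := by linarith
      linarith
    have hd2neg : d2 < 0 := by
      have h1 : cc/v < 0 := div_neg_of_neg_of_pos hccneg hv0
      rw [hd2_def]; linarith
    have hgInt : IntegrableOn (fun x => s * nPdf (x + v) - K * Real.exp (-ρ) * nPdf x)
        (Set.Iic d2) := (((nPdf_shift_integrable v).const_mul s).sub
      (nPdf_integrable.const_mul (K * Real.exp (-ρ)))).integrableOn
    have hg_nonneg : ∀ x, x ≤ d2 → 0 ≤ s * nPdf (x + v) - K * Real.exp (-ρ) * nPdf x := by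
      intro x hx
      have key : K * Real.exp (-ρ) ≤ s * Real.exp (-(v*x) - v^2/2) := by
        have h1 : K * Real.exp (-ρ) = Real.exp (Real.log K - ρ) := by
          rw [Real.exp_sub, Real.exp_log hK, Real.exp_neg, div_eq_mul_inv]
        have h2 : s * Real.exp (-(v*x) - v^2/2) = Real.exp (Real.log s - v*x - v^2/2) := by
          rw [show Real.log s - v*x - v^2/2 = Real.log s + (-(v*x) - v^2/2) by ring,
            Real.exp_add, Real.exp_log hs]
        rw [h1, h2]
        apply Real.exp_le_exp.2
        have hvx : v * x ≤ v * d2 := mul_le_mul_of_nonneg_left hx hv0.le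
        rw [hvd2] at hvx
        linarith
      rw [nPdf_shift]
      linarith [mul_le_mul_of_nonneg_right key (nPdf_pos x).le]
    have hIcc_sub : Set.Icc (d2-1) (d2-1/2) ⊆ Set.Iic d2 := fun y hy =>
      le_trans hy.2 (by linarith)
    have step1 : (∫ x in Set.Icc (d2-1) (d2-1/2),
          (s * nPdf (x + v) - K * Real.exp (-ρ) * nPdf x))
        ≤ ∫ x in Set.Iic d2, (s * nPdf (x + v) - K * Real.exp (-ρ) * nPdf x) :=
      setIntegral_mono_set hgInt
        ((ae_restrict_iff' measurableSet_Iic).2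
          (Filter.Eventually.of_forall fun x hx => hg_nonneg x hx))
        (HasSubset.Subset.eventuallyLE hIcc_sub)
    have step2 : c1*c2 * (volume (Set.Icc (d2-1) (d2-1/2))).toReal
        ≤ ∫ x in Set.Icc (d2-1) (d2-1/2), (s * nPdf (x + v) - K * Real.exp (-ρ) * nPdf x) := by
      apply setIntegral_ge_of_const_le_real measurableSet_Icc
        (by exact (measure_Icc_lt_top).ne) ?_ (hgInt.mono_set hIcc_sub)
      intro x hx
      obtain ⟨hx1, hx2⟩ := hx
      have hxneg : x ≤ 0 := by linarith
      have hnp : c2 ≤ nPdf x := by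
        rw [hc2_def]
        refine nPdf_ge ?_
        have h9 : 0 ≤ x - (L-1) := by linarith
        have h10 : 0 ≤ -(x + (L-1)) := by linarith
        have h11 := mul_nonneg h9 h10
        nlinarith [h11]
      have hbr : c1 ≤ s * Real.exp (-(v*x) - v^2/2) - K * Real.exp (-ρ) := by
        have h2 : s * Real.exp (-(v*x) - v^2/2) = Real.exp (Real.log s - v*x - v^2/2) := by
          rw [show Real.log s - v*x - v^2/2 = Real.log s + (-(v*x) - v^2/2) by ring,
            Real.exp_add, Real.exp_log hs]
        have hvx : v * x ≤ v * (d2 - 1/2) := mul_le_mul_of_nonneg_left hx2 hv0.le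
        have h3 : v * (d2 - 1/2) = cc - v^2/2 - v/2 := by
          rw [mul_sub, hvd2]; ring
        have h4 : Real.log K - ρ + ε/2 ≤ Real.log s - v*x - v^2/2 := by
          rw [h3] at hvx; linarith
        have h5 : Real.exp (Real.log K - ρ + ε/2) ≤ s * Real.exp (-(v*x) - v^2/2) := by
          rw [h2]; exact Real.exp_le_exp.2 h4
        have h6 : Real.exp (Real.log K - ρ + ε/2) = K * Real.exp (-ρ) * Real.exp (ε/2) := by
          rw [show Real.log K - ρ + ε/2 = Real.log K + (-ρ) + ε/2 by ring,
            Real.exp_add, Real.exp_add, Real.exp_log hK]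
        have h7 : Real.exp (m/2) ≤ Real.exp (-ρ) := Real.exp_le_exp.2 (by linarith)
        have h8 : (1:ℝ) ≤ Real.exp (ε/2) := by
          rw [show (1:ℝ) = Real.exp 0 by simp]
          exact Real.exp_le_exp.2 (by linarith)
        rw [hc1_def]
        have hKe : K*Real.exp (m/2)*(Real.exp (ε/2)-1) ≤ K*Real.exp (-ρ)*(Real.exp (ε/2)-1) :=
          mul_le_mul_of_nonneg_right (mul_le_mul_of_nonneg_left h7 hK.le) (by linarith)
        linarith [h5, h6.ge, h6.le, hKe]
      have hmul := mul_le_mul hbr hnp hc2.le (le_trans hc1.le hbr)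
      rw [nPdf_shift]
      linarith [hmul]
    have hvol : (volume (Set.Icc (d2-1) (d2-1/2))).toReal = 1/2 := by
      rw [Real.volume_Icc, ENNReal.toReal_ofReal (by norm_num : (0:ℝ) ≤ d2-1/2-(d2-1))]
      norm_num
    rw [hd2v, repr_lemma d2 v ρ s K]
    rw [hvol] at step2
    calc min (s*p/2) (c1*c2/2) ≤ c1*c2/2 := min_le_right _ _
      _ ≤ _ := by linarith


lemma stdCDF_eq (x : ℝ) : stdNormalCDF x = ∫ u in Set.Iic x, nPdf u := rfl

lemma bscall_eq (s K r τ σ : ℝ) (hτ : 0 < τ) (hσ : 0 < σ) :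
    BSCall τ s σ r K =
      s * (∫ u in Set.Iic ((Real.log (s/K) + r*τ)/(σ*Real.sqrt τ) + (σ*Real.sqrt τ)/2), nPdf u)
      - K * Real.exp (-(r*τ)) *
        (∫ u in Set.Iic ((Real.log (s/K) + r*τ)/(σ*Real.sqrt τ) - (σ*Real.sqrt τ)/2), nPdf u) := by
  have hw : 0 < Real.sqrt τ := Real.sqrt_pos.2 hτ
  set w := Real.sqrt τ with hw_def
  have hw2 : w^2 = τ := Real.sq_sqrt hτ.le
  unfold BSCall
  rw [stdCDF_eq, stdCDF_eq]
  have h1 : (Real.log (s/K) + (r + σ^2/2)*τ)/(σ*w) = (Real.log (s/K) + r*τ)/(σ*w) + (σ*w)/2 := by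
    rw [← hw2]
    field_simp
    ring
  have h2 : (Real.log (s/K) + (r - σ^2/2)*τ)/(σ*w) = (Real.log (s/K) + r*τ)/(σ*w) - (σ*w)/2 := by
    rw [← hw2]
    field_simp
    ring
  rw [h1, h2, neg_mul]

/-- If the out-of-the-money call price behaves like `u·τ` as `τ → 0⁺`, then the
implied volatility satisfies `h(τ)√τ → 0`. -/
theorem implied_vol_times_sqrt_time_tendsto_zero
    (s K r : ℝ) (hs : 0 < s) (hsK : s < K) (hr : 0 ≤ r)
    (δ : ℝ) (hδ : 0 < δ) (h : ℝ → ℝ) (hpos : ∀ τ ∈ Set.Ioo (0 : ℝ) δ, 0 < h τ)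
    (u : ℝ) (hu : 0 < u)
    (hlim : Tendsto (fun τ => BSCall τ s (h τ) r K / τ) (𝓝[>] (0 : ℝ)) (𝓝 u)) :
    Tendsto (fun τ => h τ * Real.sqrt τ) (𝓝[>] (0 : ℝ)) (𝓝 0) := by
  rw [Metric.tendsto_nhds]
  intro ε hε
  obtain ⟨c, hc, hcore⟩ := bs_core s K hs hsK ε hε
  have hlogKs : 0 < Real.log K - Real.log s := by
    linarith [Real.log_lt_log hs hsK]
  set A := (Real.log K - Real.log s)/2 with hA_def
  have hA : 0 < A := by rw [hA_def]; linarith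
  set τ0 := min δ (min (A/(r+1)) (c/(u+1))) with hτ0_def
  have hr1 : (0:ℝ) < r + 1 := by linarith
  have hu1 : (0:ℝ) < u + 1 := by linarith
  have hτ0 : 0 < τ0 := lt_min hδ (lt_min (div_pos hA hr1) (div_pos hc hu1))
  have hev1 : ∀ᶠ τ in 𝓝[>] (0:ℝ), τ ∈ Set.Ioo 0 τ0 :=
    Ioo_mem_nhdsGT_of_mem ⟨le_refl 0, hτ0⟩
  have hev2 : ∀ᶠ τ in 𝓝[>] (0:ℝ), BSCall τ s (h τ) r K / τ < u + 1 :=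
    hlim (Iio_mem_nhds (lt_add_one u))
  filter_upwards [hev1, hev2] with τ hτIoo hτlt
  obtain ⟨hτpos, hτlt0⟩ := hτIoo
  have hτδ : τ < δ := lt_of_lt_of_le hτlt0 (min_le_left _ _)
  have hτA : τ ≤ A/(r+1) := le_trans hτlt0.le ((min_le_right _ _).trans (min_le_left _ _))
  have hτc : τ < c/(u+1) := lt_of_lt_of_le hτlt0 ((min_le_right _ _).trans (min_le_right _ _))
  have hhτ : 0 < h τ := hpos τ ⟨hτpos, hτδ⟩
  have hsq : 0 < Real.sqrt τ := Real.sqrt_pos.2 hτpos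
  have hvτ : 0 < h τ * Real.sqrt τ := mul_pos hhτ hsq
  rw [Real.dist_eq, sub_zero, abs_of_pos hvτ]
  by_contra hcon
  push_neg at hcon
  have hρbound : r * τ ≤ A := by
    have h1 : r * τ ≤ (r+1) * τ := by nlinarith
    have h2 : (r+1) * τ ≤ (r+1) * (A/(r+1)) := mul_le_mul_of_nonneg_left hτA hr1.le
    have h3 : (r+1) * (A/(r+1)) = A := mul_div_cancel₀ _ hr1.ne'
    linarith
  have hble : c ≤ BSCall τ s (h τ) r K := by
    rw [bscall_eq s K r τ (h τ) hτpos hhτ]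
    exact hcore (r*τ) (h τ * Real.sqrt τ) (mul_nonneg hr hτpos.le)
      hρbound hvτ hcon
  have hlt : BSCall τ s (h τ) r K < (u+1) * τ := by
    have := (div_lt_iff₀ hτpos).1 hτlt
    linarith
  have hlt2 : (u+1) * τ < c := by
    have := (lt_div_iff₀ hu1).1 hτc
    linarith
  linarith

end BSAux
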